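/- Let 𝒫 = (𝒫_0,𝒫_1,𝒫_2,𝒫_3) ∈ ℝ⁴ and let m > 0 satisfy m² = 𝒫_0² - 𝒫_1² - 𝒫_2² - 𝒫_3². Then the eigenspace {v ∈ ℂ⁴ : (𝒫·γ)v = m v} equals {(φ, m⁻¹(Σ_{k=0}^{3} 𝒫_k σ_k)φ) : φ ∈ ℂ²}, where σ_0 = 1₂ and a vector v ∈ ℂ⁴ is written as a pair of vectors in ℂ² (its first two and last two components). -/

import Mathlib

open Matrix Complex

noncomputable section

/-- σ₀ = 1₂ together with the Pauli matrices σ₁, σ₂, σ₃. -/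
def pauliS : Fin 4 → Matrix (Fin 2) (Fin 2) ℂ :=
  ![1, !![0, 1; 1, 0], !![0, -I; I, 0], !![1, 0; 0, -1]]

/-- The classical gamma matrices: γ⁰ = [[0,1₂],[1₂,0]] and γᵏ = [[0,-σₖ],[σₖ,0]], k = 1,2,3. -/
def gamC : Fin 4 → Matrix (Fin 2 ⊕ Fin 2) (Fin 2 ⊕ Fin 2) ℂ :=
  ![Matrix.fromBlocks 0 1 1 0,
    Matrix.fromBlocks 0 (-pauliS 1) (pauliS 1) 0,
    Matrix.fromBlocks 0 (-pauliS 2) (pauliS 2) 0,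
    Matrix.fromBlocks 0 (-pauliS 3) (pauliS 3) 0]

/-- 𝒫·γ = Σ_j 𝒫_j γ^j for 𝒫 ∈ ℝ⁴. -/
def Pγ (P : Fin 4 → ℝ) : Matrix (Fin 2 ⊕ Fin 2) (Fin 2 ⊕ Fin 2) ℂ :=
  ∑ j : Fin 4, (P j : ℂ) • gamC j

/-- 𝒫·γ as a block matrix. -/
lemma Pgamma_blocks (P : Fin 4 → ℝ) :
    Pγ P = Matrix.fromBlocks 0
      ((P 0 : ℂ) • pauliS 0 - ((P 1:ℂ) • pauliS 1 + (P 2:ℂ) • pauliS 2 + (P 3:ℂ) • pauliS 3))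
      (∑ k : Fin 4, (P k : ℂ) • pauliS k) 0 := by
  ext i j
  rcases i with i | i <;> rcases j with j | j <;>
    simp [Pγ, gamC, show pauliS 0 = 1 from rfl, Fin.sum_univ_four, Matrix.fromBlocks] <;> ring

/-- The key algebraic identity. -/
lemma pauli_mul (P : Fin 4 → ℝ) (m : ℝ)
    (hm2 : m^2 = (P 0)^2 - (P 1)^2 - (P 2)^2 - (P 3)^2) :
    ((P 0 : ℂ) • pauliS 0 - ((P 1:ℂ) • pauliS 1 + (P 2:ℂ) • pauliS 2 + (P 3:ℂ) • pauliS 3)) *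
      (∑ k : Fin 4, (P k : ℂ) • pauliS k) = ((m:ℂ)^2) • 1 := by
  have hc : ((m:ℂ))^2 = (P 0:ℂ)^2 - (P 1:ℂ)^2 - (P 2:ℂ)^2 - (P 3:ℂ)^2 := by
    exact_mod_cast congrArg (Complex.ofReal) hm2
  ext i j
  fin_cases i <;> fin_cases j <;>
    simp [Fin.sum_univ_four, pauliS, Matrix.mul_apply, Fin.sum_univ_two, Matrix.one_apply,
      show (Fin.succ 2 : Fin 4) = 3 from rfl] <;>
    ring_nf <;> simp only [Complex.I_sq] <;> ring_nf <;>
    first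
      | rfl
      | linear_combination hc
      | linear_combination -hc
      | linear_combination 2*hc
      | linear_combination -2*hc

/-- for m > 0 with m² = 𝒫₀² - 𝒫₁² - 𝒫₂² - 𝒫₃², the eigenspace
{v : (𝒫·γ)v = m v} equals {(φ, m⁻¹(Σ_k 𝒫_k σ_k)φ) : φ ∈ ℂ²} (with σ₀ = 1₂). -/
theorem Pγ_eigenspace (P : Fin 4 → ℝ) (m : ℝ) (hm : 0 < m)
    (hm2 : m^2 = (P 0)^2 - (P 1)^2 - (P 2)^2 - (P 3)^2) :
    {v : Fin 2 ⊕ Fin 2 → ℂ | (Pγ P).mulVec v = (m : ℂ) • v}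
      = {v : Fin 2 ⊕ Fin 2 → ℂ | ∃ φ : Fin 2 → ℂ,
          v = Sum.elim φ ((m : ℂ)⁻¹ • ((∑ k : Fin 4, (P k : ℂ) • pauliS k).mulVec φ))} := by
  have hm0 : (m : ℂ) ≠ 0 := by exact_mod_cast hm.ne'
  set A : Matrix (Fin 2) (Fin 2) ℂ :=
    (P 0 : ℂ) • pauliS 0 - ((P 1:ℂ) • pauliS 1 + (P 2:ℂ) • pauliS 2 + (P 3:ℂ) • pauliS 3) with hA
  set B : Matrix (Fin 2) (Fin 2) ℂ := ∑ k : Fin 4, (P k : ℂ) • pauliS k with hB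
  have hblocks := Pgamma_blocks P
  have hAB := pauli_mul P m hm2
  ext v
  simp only [Set.mem_setOf_eq, hblocks, Matrix.fromBlocks_mulVec, Matrix.zero_mulVec,
    zero_add, add_zero]
  constructor
  · rintro hv
    refine ⟨v ∘ Sum.inl, ?_⟩
    have h1 : A.mulVec (v ∘ Sum.inr) = (m:ℂ) • (v ∘ Sum.inl) := by
      ext i; have := congrFun hv (Sum.inl i); simpa [hA] using this
    have h2 : B.mulVec (v ∘ Sum.inl) = (m:ℂ) • (v ∘ Sum.inr) := by
      ext i; have := congrFun hv (Sum.inr i); simpa [hB] using this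
    have h3 : v ∘ Sum.inr = (m:ℂ)⁻¹ • B.mulVec (v ∘ Sum.inl) := by
      rw [h2, smul_smul, inv_mul_cancel₀ hm0, one_smul]
    ext (i | i)
    · simp
    · exact congrFun h3 i
  · rintro ⟨φ, rfl⟩
    have hABv : ∀ x : Fin 2 → ℂ, A.mulVec (B.mulVec x) = ((m:ℂ)^2) • x := by
      intro x
      rw [Matrix.mulVec_mulVec, hAB, Matrix.smul_mulVec, Matrix.one_mulVec]
    ext (i | i) <;>
      simp only [Sum.elim_comp_inl, Sum.elim_comp_inr, Sum.elim_inl, Sum.elim_inr,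
        Pi.smul_apply, Matrix.mulVec_smul]
    · rw [hABv φ]
      simp only [Pi.smul_apply, smul_eq_mul, pow_two]
      field_simp
    · rw [← hB]
      simp only [Pi.smul_apply, smul_eq_mul]
      field_simp
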